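/- Let $\mathcal{S}_1, \mathcal{S}_2, \dots, \mathcal{S}_m$ be partitions of a finite set $V$ such that each $\mathcal{S}_{i+1}$ refines $\mathcal{S}_i$. Then there exist edge sets $E_1, \dots, E_m$ on $V$ such that $|E_1| = |\mathcal{S}_1| - 1$, $|E_i| = |\mathcal{S}_i| - |\mathcal{S}_{i-1}|$ for $i > 1$, and for each $i$, the graph on $V$ whose connected-component partition refines $\mathcal{S}_i$ becomes connected after adding $E_1 \cup \dots \cup E_i$; in particular $|E_1 \cup \dots \cup E_i| = |\mathcal{S}_i| - 1$. -/

import Mathlib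

/-- The graph on `V` in which two distinct vertices are adjacent iff they lie in a common
block of the partition `P`; its connected components are exactly the blocks of `P`. -/
def blockGraph {V : Type*} (P : Finset (Finset V)) : SimpleGraph V :=
  SimpleGraph.fromRel (fun u v => ∃ B ∈ P, u ∈ B ∧ v ∈ B)

namespace Stmt15Aux

open Finset

variable {V : Type*} [DecidableEq V] [Fintype V] {n : ℕ}

/-- The union of all blocks of `P` containing `v`; for a partition this is the block of `v`. -/
def blkOf (P : Finset (Finset V)) (v : V) : Finset V :=
  (P.filter (fun B => v ∈ B)).biUnion id

/-- The element of `s` minimizing `e`. -/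
def mu (e : V ≃ Fin n) (s : Finset V) (hs : s.Nonempty) : V :=
  e.symm ((s.image e).min' (hs.image e))

lemma mu_mem (e : V ≃ Fin n) (s : Finset V) (hs : s.Nonempty) : mu e s hs ∈ s := by
  have h := Finset.min'_mem (s.image e) (hs.image e)
  rw [Finset.mem_image] at h
  obtain ⟨a, ha, hae⟩ := h
  have : mu e s hs = a := by rw [mu, ← hae, Equiv.symm_apply_apply]
  rw [this]; exact ha

lemma mu_le (e : V ≃ Fin n) {s : Finset V} (hs : s.Nonempty) {w : V} (hw : w ∈ s) :
    e (mu e s hs) ≤ e w := by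
  have : e (mu e s hs) = (s.image e).min' (hs.image e) := by
    rw [mu, Equiv.apply_symm_apply]
  rw [this]
  exact Finset.min'_le _ _ (mem_image_of_mem e hw)

lemma mu_congr (e : V ≃ Fin n) {s t : Finset V} (hs : s.Nonempty) (ht : t.Nonempty)
    (h : s = t) : mu e s hs = mu e t ht := by subst h; rfl

/-- Representative of the block of `v` in `P` : the `e`-minimal element. -/
def repP (e : V ≃ Fin n) (P : Finset (Finset V)) (v : V) : V :=
  if h : (blkOf P v).Nonempty then mu e _ h else v

section Part

variable {P Q : Finset (Finset V)} (e : V ≃ Fin n)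

lemma blkOf_eq (hP : ∀ v : V, ∃! B, B ∈ P ∧ v ∈ B) {B : Finset V} (hB : B ∈ P) {v : V} (hv : v ∈ B) : blkOf P v = B := by
  ext w
  simp only [blkOf, mem_biUnion, mem_filter, id]
  constructor
  · rintro ⟨B', ⟨hB', hv'⟩, hw⟩
    obtain ⟨C, hC, huniq⟩ := hP v
    have h1 : B' = C := huniq B' ⟨hB', hv'⟩
    have h2 : B = C := huniq B ⟨hB, hv⟩
    rw [h2, ← h1]; exact hw
  · intro hw; exact ⟨B, ⟨hB, hv⟩, hw⟩

lemma mem_blkOf (hP : ∀ v : V, ∃! B, B ∈ P ∧ v ∈ B) (v : V) : v ∈ blkOf P v := by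
  obtain ⟨B, ⟨hB, hv⟩, _⟩ := hP v
  rw [blkOf_eq hP hB hv]; exact hv

lemma blkOf_mem (hP : ∀ v : V, ∃! B, B ∈ P ∧ v ∈ B) (v : V) : blkOf P v ∈ P := by
  obtain ⟨B, ⟨hB, hv⟩, _⟩ := hP v
  rw [blkOf_eq hP hB hv]; exact hB

lemma blkOf_nonempty (hP : ∀ v : V, ∃! B, B ∈ P ∧ v ∈ B) (v : V) : (blkOf P v).Nonempty := ⟨v, mem_blkOf hP v⟩

lemma repP_eq (hP : ∀ v : V, ∃! B, B ∈ P ∧ v ∈ B) (v : V) : repP e P v = mu e _ (blkOf_nonempty hP v) := dif_pos _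

lemma repP_mem (hP : ∀ v : V, ∃! B, B ∈ P ∧ v ∈ B) (v : V) : repP e P v ∈ blkOf P v := by
  rw [repP_eq e hP]; exact mu_mem e _ _

lemma repP_le (hP : ∀ v : V, ∃! B, B ∈ P ∧ v ∈ B) {v w : V} (hw : w ∈ blkOf P v) : e (repP e P v) ≤ e w := by
  rw [repP_eq e hP]; exact mu_le e _ hw

lemma blkOf_of_mem (hP : ∀ v : V, ∃! B, B ∈ P ∧ v ∈ B) {v w : V} (hw : w ∈ blkOf P v) : blkOf P w = blkOf P v :=
  blkOf_eq hP (blkOf_mem hP v) hw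

lemma repP_idem (hP : ∀ v : V, ∃! B, B ∈ P ∧ v ∈ B) (v : V) : repP e P (repP e P v) = repP e P v := by
  apply e.injective
  apply le_antisymm
  · exact repP_le e hP (mem_blkOf hP _)
  · apply repP_le e hP (v := v)
    rw [← blkOf_of_mem hP (repP_mem e hP v)]
    exact repP_mem e hP _

lemma repP_fixed_mono (hP : ∀ v : V, ∃! B, B ∈ P ∧ v ∈ B) (hQ : ∀ v : V, ∃! B, B ∈ Q ∧ v ∈ B)
    (hsub : ∀ B ∈ Q, ∃ C ∈ P, B ⊆ C) {v : V} (hv : repP e P v = v) :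
    repP e Q v = v := by
  have hQP : blkOf Q v ⊆ blkOf P v := by
    obtain ⟨C, hC, hBC⟩ := hsub _ (blkOf_mem hQ v)
    have h : blkOf P v = C := blkOf_eq hP hC (hBC (mem_blkOf hQ v))
    rw [h]; exact hBC
  apply e.injective
  apply le_antisymm
  · exact repP_le e hQ (mem_blkOf hQ v)
  · calc e v = e (repP e P v) := by rw [hv]
      _ ≤ e (repP e Q v) := repP_le e hP (hQP (repP_mem e hQ v))

lemma repP_bot (hP : ∀ v : V, ∃! B, B ∈ P ∧ v ∈ B) [Nonempty V] :
    repP e P (mu e univ univ_nonempty) = mu e univ univ_nonempty := by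
  apply e.injective
  apply le_antisymm
  · exact repP_le e hP (mem_blkOf hP _)
  · exact mu_le e _ (mem_univ _)

lemma card_repP_fixed (hP : ∀ v : V, ∃! B, B ∈ P ∧ v ∈ B) (hne : ∀ B ∈ P, B.Nonempty) :
    (univ.filter (fun v => repP e P v = v)).card = P.card := by
  apply Finset.card_bij (fun v _ => blkOf P v)
  · intro a _; exact blkOf_mem hP a
  · intro a ha b hb hab
    simp only [mem_filter] at ha hb
    calc a = repP e P a := ha.2.symm
      _ = mu e (blkOf P a) (blkOf_nonempty hP a) := repP_eq e hP a
      _ = mu e (blkOf P b) (blkOf_nonempty hP b) := mu_congr e _ _ hab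
      _ = repP e P b := (repP_eq e hP b).symm
      _ = b := hb.2
  · intro B hB
    refine ⟨mu e B (hne B hB), ?_, ?_⟩
    · rw [mem_filter]
      refine ⟨mem_univ _, ?_⟩
      rw [repP_eq e hP]
      exact mu_congr e _ _ (blkOf_eq hP hB (mu_mem e B (hne B hB)))
    · exact blkOf_eq hP hB (mu_mem e B (hne B hB))

end Part

variable [Nonempty V]

/-- The chain of representative maps: level `0` is the constant global minimum,
level `j+1` is the representative map of the partition `S j`. -/
def rho (m : ℕ) (S : Fin m → Finset (Finset V)) (e : V ≃ Fin n) : ℕ → V → V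
  | 0, _ => mu e univ univ_nonempty
  | (j+1), v => if h : j < m then repP e (S ⟨j, h⟩) v else v

/-- Fixed points of `rho` at level `j` (the representatives). -/
def RR (m : ℕ) (S : Fin m → Finset (Finset V)) (e : V ≃ Fin n) (j : ℕ) : Finset V :=
  univ.filter fun v => rho m S e j v = v

/-- New representatives appearing at level `j+1`. -/
def NN (m : ℕ) (S : Fin m → Finset (Finset V)) (e : V ≃ Fin n) (j : ℕ) : Finset V :=
  RR m S e (j + 1) \ RR m S e j

/-- The edges added at step `j`. -/
def FF (m : ℕ) (S : Fin m → Finset (Finset V)) (e : V ≃ Fin n) (j : ℕ) : Finset (Sym2 V) :=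
  (NN m S e j).image fun v => s(v, rho m S e j v)

end Stmt15Aux

/-- Given a chain `S 1, …, S m` of partitions of a finite set `V`, each
refining the previous one, there exist edge sets `E 1, …, E m` with `|E 1| = |S 1| - 1`,
`|E (i+1)| = |S (i+1)| - |S i|`, such that for each `i`, the graph whose connected
components are the blocks of `S i` becomes connected after adding `E 1 ∪ … ∪ E i`; in
particular `|E 1 ∪ … ∪ E i| = |S i| - 1`. -/
theorem stmt15 {V : Type*} [Fintype V] [DecidableEq V] [Nonempty V]
    (m : ℕ) (hm : 0 < m) (S : Fin m → Finset (Finset V))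
    (hne : ∀ i, ∀ B ∈ S i, B.Nonempty)
    (hpart : ∀ i, ∀ v : V, ∃! B, B ∈ S i ∧ v ∈ B)
    (href : ∀ (i : Fin m) (h : (i : ℕ) + 1 < m),
      ∀ B ∈ S ⟨(i : ℕ) + 1, h⟩, ∃ C ∈ S i, B ⊆ C) :
    ∃ E : Fin m → Finset (Sym2 V),
      (E ⟨0, hm⟩).card = (S ⟨0, hm⟩).card - 1 ∧
      (∀ (i : Fin m) (h : (i : ℕ) + 1 < m),
        (E ⟨(i : ℕ) + 1, h⟩).card = (S ⟨(i : ℕ) + 1, h⟩).card - (S i).card) ∧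
      (∀ i : Fin m,
        ((Finset.univ.filter (· ≤ i)).biUnion E).card = (S i).card - 1 ∧
        (blockGraph (S i) ⊔
          SimpleGraph.fromEdgeSet
            (((Finset.univ.filter (· ≤ i)).biUnion E : Finset (Sym2 V)) : Set (Sym2 V))).Connected) := by
  classical
  open Finset Stmt15Aux in
  obtain ⟨n, ⟨e⟩⟩ : ∃ n, Nonempty (V ≃ Fin n) := ⟨Fintype.card V, ⟨Fintype.equivFin V⟩⟩
  set v0 : V := mu e Finset.univ Finset.univ_nonempty with hv0
  -- basic facts about rho
  have hrho_succ : ∀ (j : ℕ) (h : j < m) (v : V),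
      rho m S e (j + 1) v = repP e (S ⟨j, h⟩) v := by
    intro j h v; simp [rho, h]
  have hrho0 : ∀ v : V, rho m S e 0 v = v0 := fun v => rfl
  -- fixed points propagate upward
  have hfix_step : ∀ (j : ℕ), j < m → ∀ v : V,
      rho m S e j v = v → rho m S e (j + 1) v = v := by
    intro j hj v hv
    match j with
    | 0 =>
      rw [hrho_succ 0 hj]
      rw [hrho0 v] at hv
      rw [← hv, hv0]
      exact repP_bot e (hpart ⟨0, hj⟩)
    | (l+1) =>
      have hl : l < m := Nat.lt_of_succ_lt hj
      rw [hrho_succ (l+1) hj]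
      rw [hrho_succ l hl] at hv
      exact repP_fixed_mono e (hpart ⟨l, hl⟩) (hpart ⟨l+1, hj⟩)
        (href ⟨l, hl⟩ hj) hv
  have hfix : ∀ (j k : ℕ), j ≤ k → k ≤ m → ∀ v : V,
      rho m S e j v = v → rho m S e k v = v := by
    intro j k
    induction k with
    | zero =>
      intro hjk _ v hv
      obtain rfl : j = 0 := Nat.le_zero.mp hjk
      exact hv
    | succ k ih =>
      intro hjk hkm v hv
      rcases Nat.lt_or_ge j (k+1) with h | h
      · have hk : rho m S e k v = v := ih (by omega) (by omega) v hv
        exact hfix_step k (by omega) v hk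
      · have hjk' : j = k + 1 := by omega
        rw [← hjk']; exact hv
  -- idempotence
  have hidem : ∀ (j : ℕ), j ≤ m → ∀ v : V, rho m S e j (rho m S e j v) = rho m S e j v := by
    intro j hj v
    match j with
    | 0 => rfl
    | (l+1) =>
      have hl : l < m := hj
      rw [hrho_succ l hl, hrho_succ l hl]
      exact repP_idem e (hpart ⟨l, hl⟩) v
  -- cardinalities of RR
  have hR0 : RR m S e 0 = {v0} := by
    ext w
    simp only [RR, Finset.mem_filter, Finset.mem_univ, true_and, Finset.mem_singleton]
    constructor
    · intro h; rw [← h]; rfl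
    · intro h; rw [h]; rfl
  have hRcard : ∀ (j : ℕ) (h : j < m), (RR m S e (j+1)).card = (S ⟨j, h⟩).card := by
    intro j h
    have : RR m S e (j+1) = Finset.univ.filter (fun v => repP e (S ⟨j, h⟩) v = v) := by
      ext w
      simp only [RR, Finset.mem_filter, hrho_succ j h]
    rw [this]
    exact card_repP_fixed e (hpart _) (hne _)
  have hRmono : ∀ (j k : ℕ), j ≤ k → k ≤ m → RR m S e j ⊆ RR m S e k := by
    intro j k hjk hkm w hw
    simp only [RR, Finset.mem_filter, Finset.mem_univ, true_and] at hw ⊢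
    exact hfix j k hjk hkm w hw
  -- cardinality of FF
  have hFcard : ∀ (j : ℕ), j < m → (FF m S e j).card = (RR m S e (j+1)).card - (RR m S e j).card := by
    intro j hj
    have hinj : Set.InjOn (fun v => s(v, rho m S e j v)) (NN m S e j) := by
      intro a ha b hb hab
      simp only [NN, Finset.coe_sdiff, Set.mem_diff, Finset.mem_coe] at ha hb
      simp only [Sym2.eq_iff] at hab
      rcases hab with ⟨h1, _⟩ | ⟨h1, h2⟩
      · exact h1
      · exfalso
        have hb' : rho m S e j b ≠ b := by
          intro hc
          exact hb.2 (by simp only [RR, Finset.mem_filter]; exact ⟨Finset.mem_univ _, hc⟩)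
        have : rho m S e j b = b := by
          calc rho m S e j b = rho m S e j (rho m S e j a) := by rw [h2]
            _ = rho m S e j a := hidem j (le_of_lt hj) a
            _ = b := h2
        exact hb' this
    rw [FF, Finset.card_image_of_injOn hinj, NN,
      Finset.card_sdiff_of_subset (hRmono j (j+1) (by omega) hj)]
  -- members of NN are not fixed at level j but fixed at level j+1
  have hNN_mem : ∀ (j : ℕ) (w : V), w ∈ NN m S e j ↔
      rho m S e (j+1) w = w ∧ rho m S e j w ≠ w := by
    intro j w
    simp only [NN, Finset.mem_sdiff, RR, Finset.mem_filter, Finset.mem_univ, true_and]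
  -- disjointness of the FF's
  have hFdisj : ∀ (j k : ℕ), j < k → k < m → Disjoint (FF m S e j) (FF m S e k) := by
    intro j k hjk hkm
    rw [Finset.disjoint_left]
    intro a haj hak
    simp only [FF, Finset.mem_image] at haj hak
    obtain ⟨v, hv, hva⟩ := haj
    obtain ⟨w, hw, hwa⟩ := hak
    rw [hNN_mem] at hv hw
    rw [← hwa] at hva
    rw [Sym2.eq_iff] at hva
    rcases hva with ⟨h1, _⟩ | ⟨_, h2⟩
    · -- v = w : v fixed at j+1, so fixed at k, contradicting w not fixed at k
      subst h1
      exact hw.2 (hfix (j+1) k hjk (le_of_lt hkm) v hv.1)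
    · -- rho j v = w : w fixed at j (idempotence), so fixed at k, contradiction
      have hwj : rho m S e j w = w := by
        rw [← h2]; exact hidem j (by omega) v
      exact hw.2 (hfix j k (le_of_lt hjk) (le_of_lt hkm) w hwj)
  -- telescoping sum
  have htel : ∀ (N : ℕ), N ≤ m →
      ∑ j ∈ Finset.range N, (FF m S e j).card = (RR m S e N).card - (RR m S e 0).card := by
    intro N hN
    induction N with
    | zero => simp
    | succ N ih =>
      rw [Finset.sum_range_succ, ih (by omega), hFcard N (by omega)]
      have h1 : (RR m S e 0).card ≤ (RR m S e N).card :=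
        Finset.card_le_card (hRmono 0 N (by omega) (by omega))
      have h2 : (RR m S e N).card ≤ (RR m S e (N+1)).card :=
        Finset.card_le_card (hRmono N (N+1) (by omega) hN)
      omega
  refine ⟨fun i => FF m S e i, ?_, ?_, ?_⟩
  · -- |E 0| = |S 0| - 1
    rw [hFcard 0 hm, hRcard 0 hm, hR0, Finset.card_singleton]
  · -- |E (i+1)| = |S (i+1)| - |S i|
    intro i h
    rw [hFcard (i+1) h, hRcard (i+1) h, hRcard i i.isLt]
  · intro i
    -- rewrite the union as a biUnion over range
    have hU : (Finset.univ.filter (· ≤ i)).biUnion (fun j : Fin m => FF m S e j)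
        = (Finset.range ((i : ℕ) + 1)).biUnion (FF m S e) := by
      ext a
      simp only [Finset.mem_biUnion, Finset.mem_filter, Finset.mem_univ, true_and,
        Finset.mem_range]
      constructor
      · rintro ⟨j, hj, ha⟩
        have : (j : ℕ) ≤ (i : ℕ) := hj
        exact ⟨j, by omega, ha⟩
      · rintro ⟨j, hj, ha⟩
        refine ⟨⟨j, by omega⟩, ?_, ha⟩
        exact Fin.mk_le_mk.mpr (by omega) -- might need adjustment
    constructor
    · rw [hU, Finset.card_biUnion, htel ((i : ℕ) + 1) i.isLt, hRcard i i.isLt, hR0,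
        Finset.card_singleton]
      · intro j hj k hk hjk
        rcases Nat.lt_or_ge j k with h | h
        · exact hFdisj j k h (by simp only [Finset.mem_coe, Finset.mem_range] at hk; omega)
        · have : k < j := by omega
          exact (hFdisj k j this (by simp only [Finset.mem_coe, Finset.mem_range] at hj; omega)).symm
    · -- connectivity
      set G := blockGraph (S i) ⊔
          SimpleGraph.fromEdgeSet
            ((((Finset.univ.filter (· ≤ i)).biUnion (fun j : Fin m => FF m S e j) :
              Finset (Sym2 V)) : Set (Sym2 V))) with hG
      have hedge : ∀ (j : ℕ), j ≤ (i : ℕ) → ∀ a ∈ FF m S e j,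
          a ∈ (Finset.univ.filter (· ≤ i)).biUnion (fun j : Fin m => FF m S e j) := by
        intro j hj a ha
        rw [hU, Finset.mem_biUnion]
        exact ⟨j, Finset.mem_range.mpr (by omega), ha⟩
      -- every fixed point of rho at level j ≤ i+1 reaches v0
      have hreach : ∀ (j : ℕ), j ≤ (i : ℕ) + 1 → ∀ w : V,
          rho m S e j w = w → G.Reachable w v0 := by
        intro j
        induction j with
        | zero =>
          intro _ w hw
          rw [hrho0 w] at hw
          rw [← hw]
        | succ j ih =>
          intro hj w hw
          by_cases hwj : rho m S e j w = w
          · exact ih (by omega) w hwj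
          · have hwN : w ∈ NN m S e j := (hNN_mem j w).mpr ⟨hw, hwj⟩
            have hedgemem : s(w, rho m S e j w) ∈
                (Finset.univ.filter (· ≤ i)).biUnion (fun j : Fin m => FF m S e j) :=
              hedge j (by omega) _ (Finset.mem_image_of_mem _ hwN)
            have hadj : G.Adj w (rho m S e j w) := by
              rw [hG]
              rw [SimpleGraph.sup_adj]
              right
              rw [SimpleGraph.fromEdgeSet_adj]
              exact ⟨by exact_mod_cast hedgemem, fun hc => hwj hc.symm⟩
            have hfixu : rho m S e j (rho m S e j w) = rho m S e j w :=
              hidem j (by omega) w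
            exact (hadj.toWalk.reachable).trans (ih (by omega) _ hfixu)
      rw [SimpleGraph.connected_iff]
      refine ⟨?_, inferInstance⟩
      intro u v
      have key : ∀ w : V, G.Reachable w v0 := by
        intro w
        have h1 : G.Reachable w (rho m S e ((i : ℕ) + 1) w) := by
          by_cases hww : rho m S e ((i : ℕ) + 1) w = w
          · rw [hww]
          · have hmem : rho m S e ((i : ℕ) + 1) w ∈ blkOf (S i) w := by
              rw [hrho_succ i i.isLt]
              exact repP_mem e (hpart i) w
            have hadj : G.Adj w (rho m S e ((i : ℕ) + 1) w) := by
              rw [hG]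
              rw [SimpleGraph.sup_adj]
              left
              rw [blockGraph, SimpleGraph.fromRel_adj]
              refine ⟨fun hc => hww hc.symm, Or.inl ?_⟩
              exact ⟨blkOf (S i) w, blkOf_mem (hpart i) w, mem_blkOf (hpart i) w, hmem⟩
            exact hadj.toWalk.reachable
        have h2 := hreach ((i : ℕ) + 1) (le_refl _) (rho m S e ((i : ℕ) + 1) w)
          (hidem ((i : ℕ) + 1) i.isLt w)
        exact h1.trans h2
      exact (key u).trans (key v).symm
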